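/- Let A be a unital C*-algebra, let e ∈ A be a projection, let u ∈ A be a unitary, and let 0 ≤ ε ≤ 1/2. Set b := e·u·e and c := b*·b + 1 − e. If ‖b*·b − e‖ ≤ ε, then ‖c − 1‖ ≤ ε, c is a positive invertible element, and ‖b·c^{−1/2} − b‖ ≤ ε. -/

import Mathlib

open scoped NNReal

lemma sqrt_inv_sub_one_abs_le {x : ℝ} (hx : 1 / 2 ≤ x) :
    |(Real.sqrt x)⁻¹ - 1| ≤ |x - 1| := by
  set s := Real.sqrt x with hs_def
  have hx0 : (0:ℝ) ≤ x := by linarith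
  have hs0 : 0 < s := Real.sqrt_pos.mpr (by linarith)
  have hss : s * s = x := Real.mul_self_sqrt hx0
  have hs_half : 1 / 2 ≤ s := by nlinarith [hs0]
  have h1 : s⁻¹ - 1 = (1 - s) / s := by field_simp
  have h2 : x - 1 = (s - 1) * (s + 1) := by rw [← hss]; ring
  rw [h1, h2, abs_div, abs_mul, abs_sub_comm 1 s, abs_of_pos hs0,
    abs_of_pos (by linarith : (0:ℝ) < s + 1), div_le_iff₀ hs0]
  nlinarith [abs_nonneg (s - 1)]


/-- For a projection `e`, a unitary `u`, `b := e·u·e` and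
`c := b*·b + 1 − e`, if `‖b*·b − e‖ ≤ ε ≤ 1/2` then `‖c − 1‖ ≤ ε`, `c` is positive
invertible, and `‖b·c^{−1/2} − b‖ ≤ ε`. -/
theorem compressed_polar_part_estimate {A : Type*} [CStarAlgebra A]
    [PartialOrder A] [StarOrderedRing A]
    (ε : ℝ) (hε0 : 0 ≤ ε) (hε : ε ≤ 1 / 2)
    (e : A) (he : IsSelfAdjoint e) (he2 : e * e = e)
    (u : A) (hu : u ∈ unitary A)
    (hb : ‖star (e * u * e) * (e * u * e) - e‖ ≤ ε) :
    ‖(star (e * u * e) * (e * u * e) + 1 - e) - 1‖ ≤ ε ∧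
      0 ≤ star (e * u * e) * (e * u * e) + 1 - e ∧
      IsUnit (star (e * u * e) * (e * u * e) + 1 - e) ∧
      ‖(e * u * e) * CFC.rpow (star (e * u * e) * (e * u * e) + 1 - e) (-(1 / 2) : ℝ)
        - (e * u * e)‖ ≤ ε := by
  obtain hA | hA := subsingleton_or_nontrivial A
  · have hz : ∀ x : A, ‖x‖ = 0 := fun x => by rw [Subsingleton.elim x 0, norm_zero]
    exact ⟨by rw [hz]; exact hε0, le_of_eq (Subsingleton.elim _ _), isUnit_of_subsingleton _,
      by rw [hz]; exact hε0⟩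
  set b : A := e * u * e with hb_def
  set c : A := star b * b + 1 - e with hc_def
  -- Part 1: ‖c - 1‖ ≤ ε
  have hc1 : c - 1 = star b * b - e := by rw [hc_def]; abel
  have h1 : ‖c - 1‖ ≤ ε := by rw [hc1]; exact hb
  -- Part 2: 0 ≤ c
  have h1e : (0:A) ≤ 1 - e := by
    have : (1 - e : A) = star (1 - e) * (1 - e) := by
      rw [star_sub, star_one, he.star_eq, sub_mul, one_mul, mul_sub, mul_one, he2]
      abel
    rw [this]
    exact star_mul_self_nonneg _
  have h2 : (0:A) ≤ c := by
    have : c = star b * b + (1 - e) := by rw [hc_def]; abel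
    rw [this]
    exact add_nonneg (star_mul_self_nonneg b) h1e
  -- Part 3: IsUnit c
  have h3 : IsUnit c := by
    have hlt : ‖1 - c‖ < 1 := by
      rw [← neg_sub, norm_neg]; linarith
    have : c = 1 - (1 - c) := by abel
    rw [this]
    exact (Units.oneSub (1 - c) hlt).isUnit
  -- selfadjointness of c
  have hcsa : IsSelfAdjoint c := by
    rw [hc_def]
    exact ((IsSelfAdjoint.star_mul_self b).add (IsSelfAdjoint.one A)).sub he
  -- spectrum bounds
  have hspec : ∀ x ∈ spectrum ℝ c, |x - 1| ≤ ε := by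
    intro x hx
    have hmem : x - 1 ∈ spectrum ℝ (c - algebraMap ℝ A 1) := by
      rw [← spectrum.sub_singleton_eq]
      exact Set.sub_mem_sub hx rfl
    rw [map_one] at hmem
    calc |x - 1| = ‖x - 1‖ := (Real.norm_eq_abs _).symm
      _ ≤ ‖c - 1‖ := spectrum.norm_le_norm_of_mem hmem
      _ ≤ ε := h1
  have hspec2 : ∀ x ∈ spectrum ℝ c, (1:ℝ)/2 ≤ x := by
    intro x hx
    have := hspec x hx
    have := abs_le.mp this
    linarith [this.1]
  -- rewrite rpow as real cfc
  set f : ℝ → ℝ := fun x => ((x.toNNReal ^ (-(1/2):ℝ) : ℝ≥0) : ℝ) with hf_def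
  have hrw : CFC.rpow c (-(1/2) : ℝ) = cfc f c := by
    rw [CFC.rpow]
    exact cfc_nnreal_eq_real _ _ h2
  have hcont : ContinuousOn f (spectrum ℝ c) := by
    intro x hx
    apply ContinuousAt.continuousWithinAt
    have hx2 := hspec2 x hx
    have hne : x.toNNReal ≠ 0 := by
      simp only [ne_eq, Real.toNNReal_eq_zero, not_le]
      linarith
    exact (NNReal.continuous_coe.continuousAt.comp
      (NNReal.continuousAt_rpow_const (Or.inl hne))).comp
      continuous_real_toNNReal.continuousAt
  -- value bound
  have hval : ∀ x ∈ spectrum ℝ c, |f x - 1| ≤ ε := by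
    intro x hx
    have hx2 := hspec2 x hx
    have hx0 : (0:ℝ) ≤ x := by linarith
    have hfx : f x = (Real.sqrt x)⁻¹ := by
      rw [hf_def]
      simp only
      rw [NNReal.coe_rpow, Real.coe_toNNReal x hx0, Real.rpow_neg hx0,
        Real.sqrt_eq_rpow]
    rw [hfx]
    exact (sqrt_inv_sub_one_abs_le hx2).trans (hspec x hx)
  -- norm of cfc f c - 1
  have hd : ‖cfc f c - 1‖ ≤ ε := by
    have hsub : cfc f c - 1 = cfc (fun x => f x - 1) c := by
      rw [cfc_sub f (fun _ => (1:ℝ)) c hcont continuousOn_const, cfc_const_one ℝ c]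
    rw [hsub]
    exact norm_cfc_le hε0 (fun x hx => by rw [Real.norm_eq_abs]; exact hval x hx)
  -- ‖b‖ ≤ 1
  have hnorm_e : ‖e‖ ≤ 1 := by
    have h := CStarRing.norm_star_mul_self (x := e)
    rw [he.star_eq, he2] at h
    nlinarith [norm_nonneg e]
  have hnorm_u : ‖u‖ ≤ 1 := by
    have h := CStarRing.norm_star_mul_self (x := u)
    rw [(Unitary.mem_iff.mp hu).1, norm_one] at h
    nlinarith [norm_nonneg u]
  have hnorm_b : ‖b‖ ≤ 1 := by
    calc ‖b‖ ≤ ‖e * u‖ * ‖e‖ := norm_mul_le _ _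
      _ ≤ ‖e‖ * ‖u‖ * ‖e‖ := by
        have := norm_mul_le e u
        nlinarith [norm_nonneg e, norm_nonneg (e * u)]
      _ ≤ 1 := by nlinarith [norm_nonneg e, norm_nonneg u, mul_nonneg (norm_nonneg e) (norm_nonneg u)]
  refine ⟨h1, h2, h3, ?_⟩
  calc ‖b * CFC.rpow c (-(1/2):ℝ) - b‖ = ‖b * (cfc f c - 1)‖ := by
        rw [hrw, mul_sub, mul_one]
    _ ≤ ‖b‖ * ‖cfc f c - 1‖ := norm_mul_le _ _
    _ ≤ 1 * ε := mul_le_mul hnorm_b hd (norm_nonneg _) zero_le_one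
    _ = ε := one_mul ε
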